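/- Let G be a nearly Abelian valued group satisfying axiom (D7): for all f ∈ G and n ∈ ℤ, fⁿ ≠ 1 implies fⁿ ⪯ f. Then G satisfies axiom (D9): for all f, ε ∈ G with f ≠ 1 and ε ≺ f, and all n ∈ ℤ, one has (f*ε)ⁿ*f⁻ⁿ ⪯ ε. -/
import Mathlib


variable {G : Type*} [Group G]

/-- `f ≺ g` : strict part of the dominance relation. -/
def vlt (le : G → G → Prop) (f g : G) : Prop := le f g ∧ ¬ le g f

/-- `f ≍ g` : equivalence induced by the dominance relation. -/
def veq (le : G → G → Prop) (f g : G) : Prop := le f g ∧ le g f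

/-- A dominance relation on a group `G`, making it a valued group:
a reflexive, transitive, total relation satisfying D1-D4. -/
structure IsValuation (le : G → G → Prop) : Prop where
  refl : ∀ f : G, le f f
  trans : ∀ f g h : G, le f g → le g h → le f h
  total : ∀ f g : G, le f g ∨ le g f
  d1 : ∀ f : G, f ≠ 1 → vlt le 1 f
  d2 : ∀ f g : G, le (f * g) f ∨ le (f * g) g
  d3 : ∀ f g h : G, le f g → le (h * f * h⁻¹) (h * g * h⁻¹)
  d4 : ∀ f : G, veq le f f⁻¹

/-- A valued group is nearly Abelian if `⁅f,g⁆ ≺ f` and `⁅f,g⁆ ≺ g` for all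
nonidentity `f, g`. -/
def NearlyAbelian (le : G → G → Prop) : Prop :=
  ∀ f g : G, f ≠ 1 → g ≠ 1 →
    vlt le (f⁻¹ * g⁻¹ * f * g) f ∧ vlt le (f⁻¹ * g⁻¹ * f * g) g

/-- Proposition 7.10: a nearly Abelian valued group satisfying D7
(`fⁿ ≠ 1 → fⁿ ⪯ f`) satisfies D9: `(f*ε)ⁿ * f⁻ⁿ ⪯ ε` whenever `ε ≺ f ≠ 1`. -/
theorem d9_of_nearlyAbelian (le : G → G → Prop) (hv : IsValuation le)
    (hna : NearlyAbelian le)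
    (hd7 : ∀ (f : G) (n : ℤ), f ^ n ≠ 1 → le (f ^ n) f) :
    ∀ f ε : G, f ≠ 1 → vlt le ε f → ∀ n : ℤ,
      le ((f * ε) ^ n * (f ^ n)⁻¹) ε := by
  intro f ε hf hεf n
  have le1 : ∀ x : G, le 1 x := by
    intro x
    by_cases hx : x = 1
    · rw [hx]; exact hv.refl 1
    · exact (hv.d1 x hx).1
  have mul_le : ∀ a b c : G, le a c → le b c → le (a * b) c := by
    intro a b c ha hb
    rcases hv.d2 a b with h | h
    · exact hv.trans _ _ _ h ha
    · exact hv.trans _ _ _ h hb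
  have key : ∀ (h x : G), le x ε → le (h * x * h⁻¹) ε := by
    intro h x hx
    by_cases hx1 : x = 1
    · subst hx1; simpa using le1 ε
    by_cases hh1 : h = 1
    · subst hh1; simpa using hx
    have hc := (hna x h⁻¹ hx1 (inv_ne_one.mpr hh1)).1
    have heq : h * x * h⁻¹ = x * (x⁻¹ * h⁻¹⁻¹ * x * h⁻¹) := by group
    rw [heq]
    exact mul_le _ _ _ hx (hv.trans _ _ _ hc.1 hx)
  have claim : ∀ m : ℕ, le ((f * ε) ^ m * (f ^ m)⁻¹) ε := by
    intro m
    induction m with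
    | zero => simpa using le1 ε
    | succ k ih =>
      have heq : (f * ε) ^ (k + 1) * (f ^ (k + 1))⁻¹
          = f * (ε * ((f * ε) ^ k * (f ^ k)⁻¹)) * f⁻¹ := by
        rw [pow_succ', pow_succ']
        group
      rw [heq]
      exact key f _ (mul_le _ _ _ (hv.refl ε) ih)
  rcases n with m | m
  · simpa [zpow_natCast] using claim m
  · have hu := claim (m + 1)
    have h2 := key (f ^ (m + 1))⁻¹ _ hu
    have h3 : le ((f ^ (m + 1))⁻¹ * ((f * ε) ^ (m + 1) * (f ^ (m + 1))⁻¹) *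
        ((f ^ (m + 1))⁻¹)⁻¹)⁻¹ ε :=
      hv.trans _ _ _ ((hv.d4 _).2) h2
    have heq : (f * ε) ^ (Int.negSucc m) * (f ^ (Int.negSucc m))⁻¹
        = ((f ^ (m + 1))⁻¹ * ((f * ε) ^ (m + 1) * (f ^ (m + 1))⁻¹) *
            ((f ^ (m + 1))⁻¹)⁻¹)⁻¹ := by
      rw [zpow_negSucc, zpow_negSucc]
      group
    rw [heq]; exact h3
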